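/- arXiv:1412.5855 — 5 statements merged into one kernel-verified Lean document; each statement's English description precedes it below -/
import Mathlib

section
/- Suppose F : ℝ → [0,∞) is bounded, continuous, and nondecreasing and satisfies: (i) sup_x |F(x+ε) − F(x)|·|log ε| → 0 as ε → 0⁺; (ii) sup_x |F(x−ε) − F(x)|·|log ε| → 0 as ε → 0⁺; (iii) there is C > 0 with ∫₀¹ (F(x+y) − F(x))/y dy ≤ C for all x; (iv) ∫₀¹ (F(x) − F(x−y))/y dy ≤ C for all x. Then H⁺(dF) = ∫_ℝ ( ∫₀¹ (F(x+y) − F(x−y))/y dy ) dF(x), and in particular H⁺(dF) < ∞. -/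
open MeasureTheory Set
open scoped ENNReal

/-- `log⁺ t = max (log t) 0`. -/
noncomputable def logPlus (t : ℝ) : ℝ := max (Real.log t) 0

/-- The kernel `log⁺ (1/|x-y|)`, valued in `ℝ≥0∞` (it equals `∞` on the diagonal). -/
noncomputable def logKernel (x y : ℝ) : ℝ≥0∞ :=
  if x = y then ⊤ else ENNReal.ofReal (logPlus (1 / |x - y|))

/-- Positive logarithmic energy of a nonnegative measure `μ` on `ℝ`:
`H⁺(μ) = ∫∫ log⁺(1/|x-y|) dμ(x) dμ(y)`. -/
noncomputable def HplusM (μ : Measure ℝ) : ℝ≥0∞ :=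
  ∫⁻ x, ∫⁻ y, logKernel x y ∂μ ∂μ

lemma kernel_eq (r : ℝ) (hr : 0 < r) :
    ENNReal.ofReal (logPlus (1 / r)) =
      ∫⁻ t in Set.Ioc (0:ℝ) 1, (Set.Ioi r).indicator (fun t => ENNReal.ofReal (1 / t)) t := by
  rw [lintegral_indicator measurableSet_Ioi, Measure.restrict_restrict measurableSet_Ioi]
  have hset : Set.Ioi r ∩ Set.Ioc (0:ℝ) 1 = Set.Ioc r 1 := by
    ext t
    simp only [Set.mem_inter_iff, Set.mem_Ioi, Set.mem_Ioc]
    exact ⟨fun ⟨h1, _, h3⟩ => ⟨h1, h3⟩, fun ⟨h1, h2⟩ => ⟨h1, hr.trans h1, h2⟩⟩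
  rw [hset]
  rcases le_or_gt 1 r with h1r | h1r
  · rw [Set.Ioc_eq_empty (by intro h; linarith), Measure.restrict_empty, lintegral_zero_measure]
    have hlog : Real.log (1/r) ≤ 0 :=
      Real.log_nonpos (by positivity) ((div_le_one hr).mpr h1r)
    rw [show logPlus (1/r) = 0 from max_eq_right hlog, ENNReal.ofReal_zero]
  · have hInt : IntegrableOn (fun t : ℝ => 1 / t) (Set.Ioc r 1) := by
      have hc : ContinuousOn (fun t : ℝ => 1 / t) (Set.Icc r 1) := by
        apply ContinuousOn.div continuousOn_const continuousOn_id
        intro t ht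
        exact ne_of_gt (lt_of_lt_of_le hr ht.1)
      exact (hc.integrableOn_compact isCompact_Icc).mono_set Set.Ioc_subset_Icc_self
    have hnn : 0 ≤ᵐ[volume.restrict (Set.Ioc r 1)] fun t : ℝ => 1 / t := by
      refine (ae_restrict_iff' measurableSet_Ioc).mpr (Filter.Eventually.of_forall ?_)
      intro t ht
      have : 0 < t := hr.trans ht.1
      positivity
    rw [← ofReal_integral_eq_lintegral_ofReal hInt hnn]
    have hval : ∫ t in Set.Ioc r 1, 1 / t = Real.log (1 / r) := by
      rw [← intervalIntegral.integral_of_le h1r.le, integral_one_div]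
      intro h
      rw [Set.uIcc_of_le h1r.le] at h
      exact absurd h.1 (by linarith)
    rw [hval]
    congr 1
    exact max_eq_left (Real.log_nonneg ((one_lt_div hr).mpr h1r).le)


/-- Suppose `F : ℝ → [0,∞)` is bounded, continuous and nondecreasing, and satisfies
(i) `(F (x+ε) - F x)·|log ε| → 0` as `ε → 0⁺` uniformly in `x`,
(ii) `(F x - F (x-ε))·|log ε| → 0` as `ε → 0⁺` uniformly in `x`,
(iii) `∫₀¹ (F (x+y) - F x)/y dy ≤ C` uniformly in `x`,
(iv) `∫₀¹ (F x - F (x-y))/y dy ≤ C` uniformly in `x`.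
Then for the Lebesgue–Stieltjes measure `dF` (characterized by `dF((a,b]) = F b - F a`)
one has `H⁺(dF) = ∫_ℝ (∫₀¹ (F (x+y) - F (x-y))/y dy) dF(x)`, and in particular
`H⁺(dF) < ∞`. -/
theorem hplusM_eq_of_uniform_conditions (F : ℝ → ℝ) (C : ℝ) (hC : 0 < C)
    (hF0 : ∀ x, 0 ≤ F x) (hcont : Continuous F) (hmono : Monotone F)
    (hbdd : ∃ M : ℝ, ∀ x, F x ≤ M)
    (hi : ∀ δ : ℝ, 0 < δ → ∃ ε₀ : ℝ, 0 < ε₀ ∧ ∀ ε : ℝ, 0 < ε → ε < ε₀ →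
      ∀ x : ℝ, (F (x + ε) - F x) * |Real.log ε| < δ)
    (hii : ∀ δ : ℝ, 0 < δ → ∃ ε₀ : ℝ, 0 < ε₀ ∧ ∀ ε : ℝ, 0 < ε → ε < ε₀ →
      ∀ x : ℝ, (F x - F (x - ε)) * |Real.log ε| < δ)
    (hiii : ∀ x : ℝ,
      ∫⁻ y in Set.Ioc (0:ℝ) 1, ENNReal.ofReal ((F (x + y) - F x) / y) ≤ ENNReal.ofReal C)
    (hiv : ∀ x : ℝ,
      ∫⁻ y in Set.Ioc (0:ℝ) 1, ENNReal.ofReal ((F x - F (x - y)) / y) ≤ ENNReal.ofReal C)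
    (μ : Measure ℝ)
    (hμ : ∀ a b : ℝ, a ≤ b → μ (Set.Ioc a b) = ENNReal.ofReal (F b - F a)) :
    HplusM μ =
      (∫⁻ x, (∫⁻ y in Set.Ioc (0:ℝ) 1, ENNReal.ofReal ((F (x + y) - F (x - y)) / y)) ∂μ)
    ∧ HplusM μ < ⊤ := by
  obtain ⟨M, hM⟩ := hbdd
  -- μ is atomless
  have hatom : ∀ a : ℝ, μ {a} = 0 := by
    intro a
    have key : ∀ n : ℕ, μ {a} ≤ ENNReal.ofReal (F a - F (a - 1/(n+1))) := by
      intro n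
      have hpos : (0:ℝ) < 1/(n+1) := by positivity
      rw [← hμ (a - 1/(n+1)) a (by linarith)]
      refine measure_mono fun y hy => ?_
      rw [Set.mem_singleton_iff] at hy
      subst hy
      exact ⟨by linarith, le_refl _⟩
    have htend : Filter.Tendsto (fun n : ℕ => ENNReal.ofReal (F a - F (a - 1/(n+1))))
        Filter.atTop (nhds 0) := by
      have h1 : Filter.Tendsto (fun n : ℕ => a - 1/((n:ℝ)+1)) Filter.atTop (nhds a) := by
        have := tendsto_one_div_add_atTop_nhds_zero_nat (𝕜 := ℝ)
        have h2 := this.const_sub a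
        simpa using h2
      have h3 : Filter.Tendsto (fun n : ℕ => F a - F (a - 1/((n:ℝ)+1))) Filter.atTop (nhds 0) := by
        have := (hcont.tendsto a).comp h1
        have h4 := this.const_sub (F a)
        simpa using h4
      have : Filter.Tendsto (fun n : ℕ => ENNReal.ofReal (F a - F (a - 1/((n:ℝ)+1))))
          Filter.atTop (nhds (ENNReal.ofReal 0)) :=
        (ENNReal.continuous_ofReal.tendsto 0).comp h3
      simpa using this
    exact le_antisymm (ge_of_tendsto' htend key) zero_le
  -- measure of open balls
  have hIoo : ∀ x t : ℝ, 0 < t →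
      μ (Set.Ioo (x - t) (x + t)) = ENNReal.ofReal (F (x + t) - F (x - t)) := by
    intro x t ht
    have hlt : x - t < x + t := by linarith
    have hsplit : Set.Ioo (x - t) (x + t) ∪ {x + t} = Set.Ioc (x - t) (x + t) :=
      Set.Ioo_union_right hlt
    have h1 : μ (Set.Ioc (x - t) (x + t)) ≤ μ (Set.Ioo (x - t) (x + t)) := by
      calc μ (Set.Ioc (x - t) (x + t)) = μ (Set.Ioo (x - t) (x + t) ∪ {x + t}) := by rw [hsplit]
        _ ≤ μ (Set.Ioo (x - t) (x + t)) + μ {x + t} := measure_union_le _ _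
        _ = μ (Set.Ioo (x - t) (x + t)) := by rw [hatom, add_zero]
    have h2 : μ (Set.Ioo (x - t) (x + t)) = μ (Set.Ioc (x - t) (x + t)) :=
      le_antisymm (measure_mono Set.Ioo_subset_Ioc_self) h1
    rw [h2, hμ _ _ hlt.le]
  -- μ is a finite measure
  have hfin : μ Set.univ ≤ ENNReal.ofReal M := by
    have hcover : (Set.univ : Set ℝ) = ⋃ n : ℕ, Set.Ioc (-(n:ℝ)) n := by
      ext y
      simp only [Set.mem_univ, true_iff, Set.mem_iUnion, Set.mem_Ioc]
      obtain ⟨n, hn⟩ := exists_nat_gt |y|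
      obtain ⟨h1, h2⟩ := abs_lt.mp hn
      exact ⟨n, h1, h2.le⟩
    have hdir : Directed (· ⊆ ·) (fun n : ℕ => Set.Ioc (-(n:ℝ)) n) := by
      refine Monotone.directed_le fun m n hmn => ?_
      exact Set.Ioc_subset_Ioc (neg_le_neg (Nat.cast_le.mpr hmn)) (Nat.cast_le.mpr hmn)
    rw [hcover, hdir.measure_iUnion]
    refine iSup_le fun n => ?_
    rw [hμ _ _ ((neg_nonpos.mpr (Nat.cast_nonneg n)).trans (Nat.cast_nonneg n))]
    exact ENNReal.ofReal_le_ofReal (by linarith [hM (n:ℝ), hF0 (-(n:ℝ))])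
  haveI : IsFiniteMeasure μ :=
    ⟨lt_of_le_of_lt hfin ENNReal.ofReal_lt_top⟩
  -- key pointwise identity
  have hpoint : ∀ x : ℝ, ∫⁻ y, logKernel x y ∂μ
      = ∫⁻ t in Set.Ioc (0:ℝ) 1, ENNReal.ofReal ((F (x + t) - F (x - t)) / t) := by
    intro x
    have hae : (fun y => logKernel x y) =ᵐ[μ]
        (fun y => ∫⁻ t in Set.Ioc (0:ℝ) 1,
          (Set.Ioi |x - y|).indicator (fun t => ENNReal.ofReal (1 / t)) t) := by
      have hne : ∀ᵐ y ∂μ, y ≠ x := by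
        rw [ae_iff]
        convert hatom x using 2
        ext y
        simp
      filter_upwards [hne] with y hy
      have hxy : x ≠ y := fun h => hy h.symm
      rw [logKernel, if_neg hxy]
      exact kernel_eq |x - y| (abs_pos.mpr (sub_ne_zero.mpr hxy))
    rw [lintegral_congr_ae hae]
    -- swap the integrals
    have hswap : ∫⁻ y, (∫⁻ t in Set.Ioc (0:ℝ) 1,
          (Set.Ioi |x - y|).indicator (fun t => ENNReal.ofReal (1 / t)) t) ∂μ
        = ∫⁻ t in Set.Ioc (0:ℝ) 1,
          (∫⁻ y, (Set.Ioi |x - y|).indicator (fun t => ENNReal.ofReal (1 / t)) t ∂μ) ∂volume := by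
      have hm : AEMeasurable (Function.uncurry fun (y t : ℝ) =>
          (Set.Ioi |x - y|).indicator (fun t => ENNReal.ofReal (1 / t)) t)
          (μ.prod (volume.restrict (Set.Ioc (0:ℝ) 1))) := by
        have heq : (Function.uncurry fun (y t : ℝ) =>
            (Set.Ioi |x - y|).indicator (fun t => ENNReal.ofReal (1 / t)) t)
            = fun p : ℝ × ℝ =>
              ({p : ℝ × ℝ | |x - p.1| < p.2}).indicator (fun p => ENNReal.ofReal (1 / p.2)) p := by
          funext p
          simp only [Function.uncurry, Set.indicator_apply, Set.mem_Ioi, Set.mem_setOf_eq]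
        rw [heq]
        refine (Measurable.indicator ?_ ?_).aemeasurable
        · exact (measurable_const.div measurable_snd).ennreal_ofReal
        · exact (isOpen_lt ((continuous_const.sub continuous_fst).abs) continuous_snd).measurableSet
      exact lintegral_lintegral_swap hm
    rw [hswap]
    refine setLIntegral_congr_fun measurableSet_Ioc (fun t ht => ?_)
    have ht0 : 0 < t := ht.1
    have hind : ∀ y : ℝ, (Set.Ioi |x - y|).indicator (fun s => ENNReal.ofReal (1 / s)) t
        = (Set.Ioo (x - t) (x + t)).indicator (fun _ => ENNReal.ofReal (1 / t)) y := by
      intro y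
      simp only [Set.indicator_apply, Set.mem_Ioi, Set.mem_Ioo]
      congr 1
      · simp only [eq_iff_iff]
        rw [abs_sub_lt_iff]
        constructor
        · rintro ⟨h1, h2⟩; exact ⟨by linarith, by linarith⟩
        · rintro ⟨h1, h2⟩; exact ⟨by linarith, by linarith⟩
    calc ∫⁻ y, (Set.Ioi |x - y|).indicator (fun s => ENNReal.ofReal (1 / s)) t ∂μ
        = ∫⁻ y, (Set.Ioo (x - t) (x + t)).indicator (fun _ => ENNReal.ofReal (1 / t)) y ∂μ := by
          exact lintegral_congr hind
      _ = ENNReal.ofReal (1 / t) * μ (Set.Ioo (x - t) (x + t)) := by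
          rw [lintegral_indicator measurableSet_Ioo, setLIntegral_const]
      _ = ENNReal.ofReal (1 / t) * ENNReal.ofReal (F (x + t) - F (x - t)) := by
          rw [hIoo x t ht0]
      _ = ENNReal.ofReal ((F (x + t) - F (x - t)) / t) := by
          rw [← ENNReal.ofReal_mul (by positivity : (0:ℝ) ≤ 1 / t)]
          congr 1
          rw [one_div, inv_mul_eq_div]
  -- conclusion
  have heqn : HplusM μ =
      ∫⁻ x, (∫⁻ y in Set.Ioc (0:ℝ) 1, ENNReal.ofReal ((F (x + y) - F (x - y)) / y)) ∂μ := by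
    rw [HplusM]
    exact lintegral_congr hpoint
  refine ⟨heqn, ?_⟩
  rw [heqn]
  have hbound : ∀ x : ℝ,
      (∫⁻ y in Set.Ioc (0:ℝ) 1, ENNReal.ofReal ((F (x + y) - F (x - y)) / y))
      ≤ ENNReal.ofReal C + ENNReal.ofReal C := by
    intro x
    have hsplit : ∀ y ∈ Set.Ioc (0:ℝ) 1,
        ENNReal.ofReal ((F (x + y) - F (x - y)) / y)
        = ENNReal.ofReal ((F (x + y) - F x) / y) + ENNReal.ofReal ((F x - F (x - y)) / y) := by
      intro y hy
      have hy0 : 0 < y := hy.1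
      have h1 : 0 ≤ (F (x + y) - F x) / y :=
        div_nonneg (by linarith [hmono (by linarith : x ≤ x + y)]) hy0.le
      have h2 : 0 ≤ (F x - F (x - y)) / y :=
        div_nonneg (by linarith [hmono (by linarith : x - y ≤ x)]) hy0.le
      rw [← ENNReal.ofReal_add h1 h2]
      congr 1
      rw [← add_div]
      ring_nf
    calc (∫⁻ y in Set.Ioc (0:ℝ) 1, ENNReal.ofReal ((F (x + y) - F (x - y)) / y))
        = ∫⁻ y in Set.Ioc (0:ℝ) 1,
            (ENNReal.ofReal ((F (x + y) - F x) / y) + ENNReal.ofReal ((F x - F (x - y)) / y)) := by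
          exact setLIntegral_congr_fun measurableSet_Ioc
            hsplit
      _ ≤ (∫⁻ y in Set.Ioc (0:ℝ) 1, ENNReal.ofReal ((F (x + y) - F x) / y))
          + (∫⁻ y in Set.Ioc (0:ℝ) 1, ENNReal.ofReal ((F x - F (x - y)) / y)) :=
          by
          have hm1 : Measurable fun y : ℝ => ENNReal.ofReal ((F (x + y) - F x) / y) := by
            apply Measurable.ennreal_ofReal
            exact ((hcont.comp (continuous_const.add continuous_id)).sub
              continuous_const).measurable.div measurable_id
          exact le_of_eq (lintegral_add_left hm1 _)
      _ ≤ ENNReal.ofReal C + ENNReal.ofReal C := add_le_add (hiii x) (hiv x)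
  calc (∫⁻ x, (∫⁻ y in Set.Ioc (0:ℝ) 1, ENNReal.ofReal ((F (x + y) - F (x - y)) / y)) ∂μ)
      ≤ ∫⁻ _, (ENNReal.ofReal C + ENNReal.ofReal C) ∂μ := lintegral_mono hbound
    _ = (ENNReal.ofReal C + ENNReal.ofReal C) * μ Set.univ := by rw [lintegral_const]
    _ < ⊤ := ENNReal.mul_lt_top (by finiteness) (measure_lt_top μ _)
end

section
/- Let F : ℝ → [0,∞) be bounded, continuous, and nondecreasing, and suppose there exist β > 1 and ε > 0 such that |F(x+y) − F(x)| ≤ 1/|log|y||^β for all x ∈ ℝ and all y with 0 < |y| ≤ ε. Then H⁺(dF) = ∫_ℝ ∫_ℝ log⁺(1/|x−y|) dF(x) dF(y) < ∞. -/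
open MeasureTheory Set
open scoped ENNReal

lemma kernel_le_tsum_indicator (x y : ℝ) :
    ENNReal.ofReal (logPlus (1 / |x - y|)) ≤
      ∑' k : ℕ, (Metric.ball x (Real.exp (-(k:ℝ)))).indicator (fun _ => (1:ℝ≥0∞)) y := by
  rcases eq_or_ne x y with rfl | hxy
  · simp [logPlus]
  have hr : 0 < |x - y| := abs_pos.mpr (sub_ne_zero.mpr hxy)
  set L := Real.log (1 / |x - y|) with hL
  have hlogr : Real.log |x - y| = -L := by
    rw [hL, one_div, Real.log_inv, neg_neg]
  rcases le_or_gt L 0 with h | h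
  · have h0 : logPlus (1 / |x - y|) = 0 := max_eq_right h
    rw [h0, ENNReal.ofReal_zero]
    exact zero_le
  · have hind : ∀ k : ℕ, k < ⌈L⌉₊ →
        (Metric.ball x (Real.exp (-(k:ℝ)))).indicator (fun _ => (1:ℝ≥0∞)) y = 1 := by
      intro k hk
      have hkL : (k:ℝ) < L := Nat.lt_ceil.mp hk
      have hmem : y ∈ Metric.ball x (Real.exp (-(k:ℝ))) := by
        rw [Metric.mem_ball, Real.dist_eq, abs_sub_comm, ← Real.exp_log hr, hlogr]
        exact Real.exp_lt_exp.mpr (by linarith)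
      simp [Set.indicator_of_mem hmem]
    calc ENNReal.ofReal (logPlus (1 / |x - y|)) ≤ ((⌈L⌉₊ : ℕ) : ℝ≥0∞) := by
          rw [← ENNReal.ofReal_natCast]
          refine ENNReal.ofReal_le_ofReal ?_
          have : logPlus (1 / |x - y|) = L := max_eq_left h.le
          rw [this]
          exact Nat.le_ceil L
      _ = ∑ k ∈ Finset.range ⌈L⌉₊,
            (Metric.ball x (Real.exp (-(k:ℝ)))).indicator (fun _ => (1:ℝ≥0∞)) y := by
          rw [Finset.sum_congr rfl (fun k hk => hind k (Finset.mem_range.mp hk))]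
          simp
      _ ≤ _ := ENNReal.sum_le_tsum _

/-- If `F : ℝ → [0,∞)` is bounded, continuous and nondecreasing, and there are `β > 1`
and `ε > 0` such that `|F (x+y) - F x| ≤ 1/|log |y||^β` for all `x` and all `y` with
`0 < |y| ≤ ε`, then the Lebesgue–Stieltjes measure `dF` (characterized by
`dF((a,b]) = F b - F a`) has finite positive logarithmic energy. -/
theorem hplusM_lt_top_of_log_modulus (F : ℝ → ℝ) (β ε : ℝ)
    (hβ : 1 < β) (hε : 0 < ε)
    (hF0 : ∀ x, 0 ≤ F x) (hcont : Continuous F) (hmono : Monotone F)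
    (hbdd : ∃ M : ℝ, ∀ x, F x ≤ M)
    (hmodulus : ∀ x y : ℝ, 0 < |y| → |y| ≤ ε →
      |F (x + y) - F x| ≤ 1 / |Real.log (abs y)| ^ β)
    (μ : Measure ℝ)
    (hμ : ∀ a b : ℝ, a ≤ b → μ (Set.Ioc a b) = ENNReal.ofReal (F b - F a)) :
    HplusM μ < ⊤ := by
  obtain ⟨M, hM⟩ := hbdd
  have hM0 : 0 ≤ M := le_trans (hF0 0) (hM 0)
  -- measure of any Ioc is bounded by M
  have hIoc : ∀ a b : ℝ, μ (Set.Ioc a b) ≤ ENNReal.ofReal M := by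
    intro a b
    rcases le_or_gt a b with h | h
    · rw [hμ a b h]
      exact ENNReal.ofReal_le_ofReal (by linarith [hF0 a, hM b])
    · simp [Set.Ioc_eq_empty (not_lt.mpr h.le)]
  -- total mass is finite
  have huniv : μ Set.univ ≤ ENNReal.ofReal M := by
    have hcover : (Set.univ : Set ℝ) = ⋃ n : ℕ, Set.Ioc (-(n:ℝ)) n := by
      ext y
      simp only [Set.mem_univ, Set.mem_iUnion, Set.mem_Ioc, true_iff]
      refine ⟨⌈|y|⌉₊ + 1, ?_, ?_⟩
      · push_cast
        have := Nat.le_ceil |y|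
        have := neg_abs_le y
        linarith
      · push_cast
        have := Nat.le_ceil |y|
        have := le_abs_self y
        linarith
    have hmonoS : Monotone (fun n : ℕ => Set.Ioc (-(n:ℝ)) n) := by
      intro m n hmn
      exact Set.Ioc_subset_Ioc (by exact_mod_cast neg_le_neg (Nat.cast_le.mpr hmn))
        (by exact_mod_cast hmn)
    rw [hcover, (hmonoS.directed_le).measure_iUnion]
    exact iSup_le fun n => hIoc _ _
  -- no atoms
  have hatom : ∀ x : ℝ, μ {x} = 0 := by
    intro x
    have hle : ∀ n : ℕ, μ {x} ≤ ENNReal.ofReal (F x - F (x - 1/(n+1))) := by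
      intro n
      have hsub : ({x} : Set ℝ) ⊆ Set.Ioc (x - 1/(n+1)) x := by
        intro z hz
        rw [Set.mem_singleton_iff] at hz
        subst hz
        have : (0:ℝ) < 1/(n+1) := by positivity
        exact ⟨by linarith, le_refl _⟩
      calc μ {x} ≤ μ (Set.Ioc (x - 1/(n+1)) x) := measure_mono hsub
        _ = ENNReal.ofReal (F x - F (x - 1/(n+1))) := by
            apply hμ
            have : (0:ℝ) < 1/(n+1) := by positivity
            linarith
    have htend : Filter.Tendsto (fun n : ℕ => ENNReal.ofReal (F x - F (x - 1/(n+1))))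
        Filter.atTop (nhds 0) := by
      have h1 : Filter.Tendsto (fun n : ℕ => x - 1/((n:ℝ)+1)) Filter.atTop (nhds x) := by
        have := tendsto_one_div_add_atTop_nhds_zero_nat (𝕜 := ℝ)
        have := Filter.Tendsto.const_sub x this
        simpa using this
      have h2 : Filter.Tendsto (fun n : ℕ => F x - F (x - 1/((n:ℝ)+1))) Filter.atTop
          (nhds (F x - F x)) :=
        Filter.Tendsto.const_sub _ ((hcont.tendsto x).comp h1)
      rw [sub_self] at h2
      have := (ENNReal.continuous_ofReal.tendsto 0).comp h2
      simpa [Function.comp_def] using this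
    have := ge_of_tendsto' htend hle
    simpa using this
  -- the constant N
  set N : ℕ := max 1 ⌈Real.log (1/ε)⌉₊ with hN
  have hNε : Real.exp (-(N:ℝ)) ≤ ε := by
    have h1 : Real.log (1/ε) ≤ (N:ℝ) := by
      calc Real.log (1/ε) ≤ (⌈Real.log (1/ε)⌉₊ : ℝ) := Nat.le_ceil _
        _ ≤ (N:ℝ) := by exact_mod_cast Nat.le_max_right _ _
    rw [one_div, Real.log_inv] at h1
    calc Real.exp (-(N:ℝ)) ≤ Real.exp (Real.log ε) := Real.exp_le_exp.mpr (by linarith)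
      _ = ε := Real.exp_log hε
  -- ball measure bounds
  have hballIoc : ∀ (x r : ℝ), 0 < r →
      μ (Metric.ball x r) ≤ ENNReal.ofReal (F (x + r) - F (x - r)) := by
    intro x r hr
    have hsub : Metric.ball x r ⊆ Set.Ioc (x - r) (x + r) := by
      intro z hz
      rw [Metric.mem_ball, Real.dist_eq, abs_lt] at hz
      constructor <;> [linarith [hz.1]; linarith [hz.2]]
    calc μ (Metric.ball x r) ≤ μ (Set.Ioc (x - r) (x + r)) := measure_mono hsub
      _ = ENNReal.ofReal (F (x + r) - F (x - r)) := hμ _ _ (by linarith)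
  have hballM : ∀ (x r : ℝ), 0 < r → μ (Metric.ball x r) ≤ ENNReal.ofReal M := by
    intro x r hr
    refine (hballIoc x r hr).trans (ENNReal.ofReal_le_ofReal ?_)
    linarith [hF0 (x - r), hM (x + r)]
  have hballk : ∀ (x : ℝ) (k : ℕ), N ≤ k →
      μ (Metric.ball x (Real.exp (-(k:ℝ)))) ≤ ENNReal.ofReal (2 / (k:ℝ)^β) := by
    intro x k hk
    set r := Real.exp (-(k:ℝ)) with hrdef
    have hr : 0 < r := Real.exp_pos _
    have hrε : r ≤ ε := by
      refine le_trans ?_ hNε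
      apply Real.exp_le_exp.mpr
      simp only [neg_le_neg_iff]
      exact_mod_cast hk
    have hk1 : 1 ≤ k := le_trans (Nat.le_max_left _ _) hk
    have habs : |r| = r := abs_of_pos hr
    have hlogr : abs (Real.log (abs r)) = (k:ℝ) := by
      rw [habs, hrdef, Real.log_exp, abs_neg,
        abs_of_nonneg (by positivity : (0:ℝ) ≤ (k:ℝ))]
    have h1 : |F (x + r) - F x| ≤ 1 / (k:ℝ)^β := by
      have := hmodulus x r (by rw [habs]; exact hr) (by rw [habs]; exact hrε)
      rwa [hlogr] at this
    have h2 : |F x - F (x - r)| ≤ 1 / (k:ℝ)^β := by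
      have := hmodulus (x - r) r (by rw [habs]; exact hr) (by rw [habs]; exact hrε)
      rw [sub_add_cancel, hlogr] at this
      exact this
    refine (hballIoc x r hr).trans (ENNReal.ofReal_le_ofReal ?_)
    have e1 := abs_le.mp h1
    have e2 := abs_le.mp h2
    have : 2 / (k:ℝ)^β = 1/(k:ℝ)^β + 1/(k:ℝ)^β := by ring
    rw [this]
    linarith [e1.2, e2.2]
  -- the constant C
  set g : ℕ → ℝ≥0∞ := fun k =>
    if k < N then ENNReal.ofReal M else ENNReal.ofReal (2 / (k:ℝ)^β) with hg
  have hCtop : (∑' k, g k) < ⊤ := by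
    have hle : ∀ k, g k ≤ (if k < N then ENNReal.ofReal M else 0)
        + ENNReal.ofReal (2 / (k:ℝ)^β) := by
      intro k
      by_cases h : k < N <;> simp [hg, h]
    calc (∑' k, g k)
        ≤ ∑' k : ℕ, ((if k < N then ENNReal.ofReal M else 0) + ENNReal.ofReal (2 / (k:ℝ)^β)) :=
          ENNReal.tsum_le_tsum hle
      _ = (∑' k : ℕ, (if k < N then ENNReal.ofReal M else 0))
          + ∑' k : ℕ, ENNReal.ofReal (2 / (k:ℝ)^β) := ENNReal.tsum_add
      _ < ⊤ := by
          apply ENNReal.add_lt_top.mpr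
          constructor
          · rw [tsum_eq_sum (s := Finset.range N)
              (fun b hb => by simp [Finset.mem_range.not.mp hb])]
            exact (ENNReal.sum_lt_top).mpr fun _ _ => by split <;> simp
          · have hsum : Summable (fun k : ℕ => 2 / (k:ℝ)^β) := by
              have := (Real.summable_one_div_nat_rpow.mpr hβ)
              simpa [div_eq_mul_inv, mul_comm, mul_assoc] using this.mul_left 2
            rw [← ENNReal.ofReal_tsum_of_nonneg (fun n => by positivity) hsum]
            exact ENNReal.ofReal_lt_top
  -- inner integral bound
  have hinner : ∀ x : ℝ, (∫⁻ y, logKernel x y ∂μ) ≤ ∑' k, g k := by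
    intro x
    have hae : (fun y => logKernel x y)
        =ᵐ[μ] (fun y => ENNReal.ofReal (logPlus (1 / |x - y|))) := by
      have : {y : ℝ | logKernel x y ≠ ENNReal.ofReal (logPlus (1 / |x - y|))} ⊆ {x} := by
        intro y hy
        simp only [Set.mem_setOf_eq] at hy
        by_contra hne
        rw [Set.mem_singleton_iff] at hne
        exact hy (by rw [logKernel, if_neg (fun h : x = y => hne h.symm)])
      exact measure_mono_null this (hatom x)
    rw [lintegral_congr_ae hae]
    calc (∫⁻ y, ENNReal.ofReal (logPlus (1 / |x - y|)) ∂μ)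
        ≤ ∫⁻ y, ∑' k : ℕ, (Metric.ball x (Real.exp (-(k:ℝ)))).indicator
            (fun _ => (1:ℝ≥0∞)) y ∂μ := lintegral_mono (kernel_le_tsum_indicator x)
      _ = ∑' k : ℕ, ∫⁻ y, (Metric.ball x (Real.exp (-(k:ℝ)))).indicator
            (fun _ => (1:ℝ≥0∞)) y ∂μ :=
          lintegral_tsum (fun k =>
            (measurable_const.indicator measurableSet_ball).aemeasurable)
      _ = ∑' k : ℕ, μ (Metric.ball x (Real.exp (-(k:ℝ)))) := by
          refine tsum_congr fun k => ?_
          exact lintegral_indicator_one measurableSet_ball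
      _ ≤ ∑' k, g k := by
          refine ENNReal.tsum_le_tsum fun k => ?_
          by_cases h : k < N
          · simp only [hg, if_pos h]
            exact hballM x _ (Real.exp_pos _)
          · simp only [hg, if_neg h]
            exact hballk x k (not_lt.mp h)
  -- conclude
  calc HplusM μ ≤ ∫⁻ _, (∑' k, g k) ∂μ := lintegral_mono hinner
    _ = (∑' k, g k) * μ Set.univ := lintegral_const _
    _ < ⊤ := ENNReal.mul_lt_top hCtop (lt_of_le_of_lt huniv ENNReal.ofReal_lt_top)
end

section
/- Let (a_n), (h_n), (d_n) be sequences with h_n > 0, 0 < d_n ≤ 1, and a_n + d_n ≤ a_{n+1} for all n ≥ 1, and let f = Σ_{n=1}^∞ h_n·1_{[a_n, a_n+d_n]}. Then H⁺(f) ≥ Σ_{n=1}^∞ h_n² d_n² log(1/d_n). -/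
open MeasureTheory Set
open scoped ENNReal

/-- Positive logarithmic energy of a nonnegative function `f : ℝ → ℝ`:
`H⁺(f) = ∫∫ log⁺(1/|x-y|) f(x) f(y) dx dy`. -/
noncomputable def Hplus (f : ℝ → ℝ) : ℝ≥0∞ :=
  ∫⁻ x, ∫⁻ y, logKernel x y * ENNReal.ofReal (f x) * ENNReal.ofReal (f y)

/-- For `f = Σₙ hₙ · 1_{[aₙ, aₙ + dₙ]}` with `hₙ > 0`, `0 < dₙ ≤ 1` and
`aₙ + dₙ ≤ aₙ₊₁`, one has `H⁺(f) ≥ Σₙ hₙ² dₙ² log(1/dₙ)`. -/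
theorem hplus_ge_sum_of_step_function (a h d : ℕ → ℝ)
    (hh : ∀ n, 0 < h n) (hd0 : ∀ n, 0 < d n) (hd1 : ∀ n, d n ≤ 1)
    (ha : ∀ n, a n + d n ≤ a (n + 1))
    (f : ℝ → ℝ)
    (hf : ∀ x, f x = ∑' n : ℕ, Set.indicator (Set.Icc (a n) (a n + d n)) (fun _ => h n) x) :
    ∑' n : ℕ, ENNReal.ofReal (h n ^ 2 * d n ^ 2 * Real.log (1 / d n)) ≤ Hplus f := by
  classical
  have haSM : StrictMono a := strictMono_nat_of_lt_succ fun n => by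
    have h1 := hd0 n; have h2 := ha n; linarith
  have hkey : ∀ (x : ℝ) (n m : ℕ), n < m →
      x ∈ Icc (a n) (a n + d n) → x ∈ Icc (a m) (a m + d m) → m = n + 1 := by
    intro x n m hnm hxn hxm
    rw [Set.mem_Icc] at hxn hxm
    by_contra hne
    have hlt : n + 1 < m := by omega
    have h5 : a (n + 1) < a m := haSM hlt
    have h1 := ha n
    linarith [hxn.2, hxm.1]
  have hfin : ∀ x : ℝ, {n : ℕ | x ∈ Icc (a n) (a n + d n)}.Finite := by
    intro x
    rcases Set.eq_empty_or_nonempty {n : ℕ | x ∈ Icc (a n) (a n + d n)} with he | ⟨n₀, hn₀⟩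
    · rw [he]; exact Set.finite_empty
    · apply Set.Finite.subset (Set.finite_Iic (n₀ + 1))
      intro m hm
      simp only [Set.mem_Iic]
      by_contra hmgt
      push_neg at hmgt
      have : m = n₀ + 1 := hkey x n₀ m (by omega) hn₀ hm
      omega
  have hsum : ∀ x : ℝ,
      Summable (fun n => (Icc (a n) (a n + d n)).indicator (fun _ => h n) x) := by
    intro x
    apply summable_of_ne_finset_zero (s := (hfin x).toFinset)
    intro n hn
    have hx : x ∉ Icc (a n) (a n + d n) := by simpa using hn
    simp [Set.indicator_of_notMem hx]
  have hfE : ∀ x : ℝ, ENNReal.ofReal (f x) =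
      ∑' n, (Icc (a n) (a n + d n)).indicator (fun _ => ENNReal.ofReal (h n)) x := by
    intro x
    rw [hf x,
      ENNReal.ofReal_tsum_of_nonneg (fun n => Set.indicator_nonneg (fun _ _ => (hh n).le) x)
        (hsum x)]
    congr 1; funext n
    by_cases hx : x ∈ Icc (a n) (a n + d n)
    · rw [Set.indicator_of_mem hx, Set.indicator_of_mem hx]
    · rw [Set.indicator_of_notMem hx, Set.indicator_of_notMem hx, ENNReal.ofReal_zero]
  set F : ℕ → ℝ → ℝ → ℝ≥0∞ := fun n x y =>
    (Icc (a n) (a n + d n)).indicator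
        (fun _ => ENNReal.ofReal (Real.log (1 / d n)) * ENNReal.ofReal (h n)) x *
      (Icc (a n) (a n + d n)).indicator (fun _ => ENNReal.ofReal (h n)) y with hF
  have hpt : ∀ x y : ℝ, (∑' n, F n x y) ≤
      logKernel x y * ENNReal.ofReal (f x) * ENNReal.ofReal (f y) := by
    intro x y
    have step : ∀ n, F n x y ≤ logKernel x y *
        ((Icc (a n) (a n + d n)).indicator (fun _ => ENNReal.ofReal (h n)) x *
          (Icc (a n) (a n + d n)).indicator (fun _ => ENNReal.ofReal (h n)) y) := by
      intro n
      by_cases hx : x ∈ Icc (a n) (a n + d n)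
      · by_cases hy : y ∈ Icc (a n) (a n + d n)
        · simp only [hF, Set.indicator_of_mem hx, Set.indicator_of_mem hy]
          have hK : ENNReal.ofReal (Real.log (1 / d n)) ≤ logKernel x y := by
            unfold logKernel
            split_ifs with hxy
            · exact le_top
            · apply ENNReal.ofReal_le_ofReal
              refine le_max_of_le_left ?_
              have habs : 0 < |x - y| := abs_pos.mpr (sub_ne_zero.mpr hxy)
              have hle : |x - y| ≤ d n := by
                rw [Set.mem_Icc] at hx hy
                rw [abs_sub_le_iff]
                constructor <;> linarith [hx.1, hx.2, hy.1, hy.2]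
              have hdiv : 1 / d n ≤ 1 / |x - y| := one_div_le_one_div_of_le habs hle
              exact Real.log_le_log (one_div_pos.mpr (hd0 n)) hdiv
          calc ENNReal.ofReal (Real.log (1 / d n)) * ENNReal.ofReal (h n) *
                ENNReal.ofReal (h n)
              ≤ logKernel x y * ENNReal.ofReal (h n) * ENNReal.ofReal (h n) := by gcongr
            _ = logKernel x y * (ENNReal.ofReal (h n) * ENNReal.ofReal (h n)) := by ring
        · simp [hF, Set.indicator_of_notMem hy]
      · simp [hF, Set.indicator_of_notMem hx]
    calc (∑' n, F n x y)
        ≤ ∑' n, logKernel x y *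
            ((Icc (a n) (a n + d n)).indicator (fun _ => ENNReal.ofReal (h n)) x *
              (Icc (a n) (a n + d n)).indicator (fun _ => ENNReal.ofReal (h n)) y) :=
          ENNReal.tsum_le_tsum step
      _ = logKernel x y * ∑' n,
            (Icc (a n) (a n + d n)).indicator (fun _ => ENNReal.ofReal (h n)) x *
              (Icc (a n) (a n + d n)).indicator (fun _ => ENNReal.ofReal (h n)) y :=
          ENNReal.tsum_mul_left
      _ ≤ logKernel x y *
            ((∑' n, (Icc (a n) (a n + d n)).indicator (fun _ => ENNReal.ofReal (h n)) x) *
              (∑' n, (Icc (a n) (a n + d n)).indicator (fun _ => ENNReal.ofReal (h n)) y)) := by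
          refine mul_le_mul_right ?_ _
          calc ∑' n, (Icc (a n) (a n + d n)).indicator (fun _ => ENNReal.ofReal (h n)) x *
                  (Icc (a n) (a n + d n)).indicator (fun _ => ENNReal.ofReal (h n)) y
              ≤ ∑' n, (Icc (a n) (a n + d n)).indicator (fun _ => ENNReal.ofReal (h n)) x *
                  (∑' m, (Icc (a m) (a m + d m)).indicator (fun _ => ENNReal.ofReal (h m)) y) :=
                ENNReal.tsum_le_tsum fun n => mul_le_mul_right (ENNReal.le_tsum n) _
            _ = _ := ENNReal.tsum_mul_right
      _ = logKernel x y * ENNReal.ofReal (f x) * ENNReal.ofReal (f y) := by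
          rw [hfE x, hfE y]; ring
  have hInt : ∀ n x, (∫⁻ y, F n x y) =
      (Icc (a n) (a n + d n)).indicator
          (fun _ => ENNReal.ofReal (Real.log (1 / d n)) * ENNReal.ofReal (h n)) x *
        (ENNReal.ofReal (h n) * ENNReal.ofReal (d n)) := by
    intro n x
    simp only [hF]
    rw [lintegral_const_mul _ (measurable_const.indicator measurableSet_Icc),
      lintegral_indicator_const measurableSet_Icc, Real.volume_Icc]
    have e1 : a n + d n - a n = d n := by ring
    rw [e1]
  have hGm : ∀ n, Measurable (fun x => ∫⁻ y, F n x y) := by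
    intro n
    have e : (fun x => ∫⁻ y, F n x y) = fun x =>
        (Icc (a n) (a n + d n)).indicator
            (fun _ => ENNReal.ofReal (Real.log (1 / d n)) * ENNReal.ofReal (h n)) x *
          (ENNReal.ofReal (h n) * ENNReal.ofReal (d n)) := funext (hInt n)
    rw [e]
    exact (measurable_const.indicator measurableSet_Icc).mul_const _
  have hFm : ∀ n x, Measurable (fun y => F n x y) := by
    intro n x
    simp only [hF]
    exact (measurable_const.indicator measurableSet_Icc).const_mul _
  have hlog : ∀ n, 0 ≤ Real.log (1 / d n) := fun n =>
    Real.log_nonneg (one_le_one_div (hd0 n) (hd1 n))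
  have hterm : ∀ n, ENNReal.ofReal (h n ^ 2 * d n ^ 2 * Real.log (1 / d n)) =
      ∫⁻ x, ∫⁻ y, F n x y := by
    intro n
    have e : (fun x => ∫⁻ y, F n x y) = fun x =>
        (Icc (a n) (a n + d n)).indicator
            (fun _ => ENNReal.ofReal (Real.log (1 / d n)) * ENNReal.ofReal (h n)) x *
          (ENNReal.ofReal (h n) * ENNReal.ofReal (d n)) := funext (hInt n)
    rw [e, lintegral_mul_const _ (measurable_const.indicator measurableSet_Icc),
      lintegral_indicator_const measurableSet_Icc, Real.volume_Icc]
    have e1 : a n + d n - a n = d n := by ring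
    rw [e1]
    have hhn := (hh n).le; have hdn := (hd0 n).le; have hl := hlog n
    rw [show h n ^ 2 * d n ^ 2 * Real.log (1 / d n)
        = Real.log (1 / d n) * (h n * (d n * (h n * d n))) by ring]
    rw [ENNReal.ofReal_mul hl, ENNReal.ofReal_mul hhn, ENNReal.ofReal_mul hdn,
      ENNReal.ofReal_mul hhn]
    ring
  calc ∑' n, ENNReal.ofReal (h n ^ 2 * d n ^ 2 * Real.log (1 / d n))
      = ∑' n, ∫⁻ x, ∫⁻ y, F n x y := tsum_congr hterm
    _ = ∫⁻ x, ∑' n, ∫⁻ y, F n x y := (lintegral_tsum fun n => (hGm n).aemeasurable).symm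
    _ = ∫⁻ x, ∫⁻ y, ∑' n, F n x y := by
        refine lintegral_congr fun x => ?_
        exact (lintegral_tsum fun n => (hFm n x).aemeasurable).symm
    _ ≤ ∫⁻ x, ∫⁻ y, logKernel x y * ENNReal.ofReal (f x) * ENNReal.ofReal (f y) :=
        lintegral_mono fun x => lintegral_mono fun y => hpt x y
    _ = Hplus f := rfl
end

section
/- There exists a nonnegative, compactly supported function f ∈ L¹(ℝ) such that H⁺(f) = ∫_ℝ ∫_ℝ log⁺(1/|x−y|) f(x) f(y) dx dy = +∞. (Such an f is given by f = Σ_{n=1}^∞ h_n·1_{[a_n, a_n+d_n]} with d_n = exp(−2^{2n}), h_n = 1/(2^n d_n), and suitably chosen disjoint intervals; it satisfies ‖f‖_{L¹} = 1.) -/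
open MeasureTheory Set
open scoped ENNReal

namespace HplusCex

noncomputable def d (n : ℕ) : ℝ := Real.exp (-(4:ℝ)^(n+1))
noncomputable def h (n : ℕ) : ℝ := (1/2:ℝ)^(n+1) * Real.exp ((4:ℝ)^(n+1))
noncomputable def a (n : ℕ) : ℝ := 1 - (1/2:ℝ)^(n+1)
noncomputable def I (n : ℕ) : Set ℝ := Set.Ico (a n) (a n + d n)

lemma d_pos (n : ℕ) : 0 < d n := Real.exp_pos _
lemma h_pos (n : ℕ) : 0 < h n := by
  unfold h; positivity

lemma hd (n : ℕ) : h n * d n = (1/2:ℝ)^(n+1) := by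
  unfold h d
  rw [mul_assoc, ← Real.exp_add]
  simp

lemma d_le (n : ℕ) : d n ≤ (1/2:ℝ)^(n+2) := by
  have h1 : ((n:ℝ)+2) ≤ (4:ℝ)^(n+1) := by
    have : (n+2 : ℕ) ≤ 4^(n+1) := by
      calc n+2 ≤ 2^(n+2) := Nat.lt_two_pow_self.le
        _ ≤ 4^(n+1) := by
          rw [show (4:ℕ) = 2^2 by norm_num, ← pow_mul]
          exact Nat.pow_le_pow_right (by norm_num) (by omega)
    exact_mod_cast this
  have h2 : d n ≤ Real.exp (-((n:ℝ)+2)) := by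
    unfold d; exact Real.exp_le_exp.2 (by linarith)
  have h3 : Real.exp (-((n:ℝ)+2)) = (Real.exp (-1))^(n+2) := by
    rw [← Real.exp_nat_mul]
    push_cast
    ring_nf
  have h4 : Real.exp (-1) ≤ 1/2 := by
    rw [Real.exp_neg]
    rw [div_eq_inv_mul, mul_one]
    apply inv_anti₀ (by norm_num)
    have := Real.add_one_le_exp 1
    linarith
  calc d n ≤ (Real.exp (-1))^(n+2) := h2.trans_eq h3
    _ ≤ (1/2)^(n+2) := pow_le_pow_left₀ (Real.exp_pos _).le h4 _

lemma a_succ (n : ℕ) : a n + (1/2:ℝ)^(n+2) = a (n+1) := by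
  unfold a; ring

lemma a_add_d_le {m n : ℕ} (hmn : m < n) : a m + d m ≤ a n := by
  have h1 : a m + d m ≤ a (m+1) := by
    have := d_le m; have := a_succ m; linarith
  have h2 : a (m+1) ≤ a n := by
    unfold a
    have : (1/2:ℝ)^(n+1) ≤ (1/2)^(m+2) :=
      pow_le_pow_of_le_one (by norm_num) (by norm_num) (by omega)
    linarith
  linarith

lemma I_disj {m n : ℕ} (hmn : m ≠ n) : Disjoint (I m) (I n) := by
  wlog hlt : m < n generalizing m n
  · exact (this hmn.symm (by omega)).symm
  · rw [Set.disjoint_left]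
    rintro x ⟨_, hx2⟩ ⟨hx3, _⟩
    have := a_add_d_le hlt
    linarith

lemma mem_I_unique {x : ℝ} {m n : ℕ} (hm : x ∈ I m) (hn : x ∈ I n) : m = n := by
  by_contra hne
  exact (I_disj hne).ne_of_mem hm hn rfl

lemma I_meas (n : ℕ) : MeasurableSet (I n) := measurableSet_Ico

lemma I_subset (n : ℕ) : I n ⊆ Set.Icc 0 1 := by
  intro x hx
  obtain ⟨h1, h2⟩ := hx
  have ha : (0:ℝ) ≤ a n := by
    unfold a
    have : (1/2:ℝ)^(n+1) ≤ 1 := pow_le_one₀ (by norm_num) (by norm_num)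
    linarith
  have hb : a n + d n ≤ 1 := by
    have h1 := d_le n
    have : (1/2:ℝ)^(n+2) ≤ (1/2)^(n+1) :=
      pow_le_pow_of_le_one (by norm_num) (by norm_num) (by omega)
    unfold a at *
    linarith
  exact ⟨ha.trans h1, h2.le.trans hb⟩

lemma vol_I (n : ℕ) : volume (I n) = ENNReal.ofReal (d n) := by
  rw [I, Real.volume_Ico]; congr 1; ring

noncomputable def F : ℝ → ℝ≥0∞ :=
  fun x => ∑' n, (I n).indicator (fun _ => ENNReal.ofReal (h n)) x

lemma F_meas : Measurable F :=
  Measurable.ennreal_tsum fun n =>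
    (measurable_const.indicator (I_meas n))

lemma F_eq_of_mem {x : ℝ} {n : ℕ} (hx : x ∈ I n) : F x = ENNReal.ofReal (h n) := by
  unfold F
  rw [tsum_eq_single n]
  · simp [Set.indicator_of_mem hx]
  · intro m hm
    apply Set.indicator_of_notMem
    intro hxm
    exact hm (mem_I_unique hxm hx)

lemma F_eq_zero {x : ℝ} (hx : ∀ n, x ∉ I n) : F x = 0 := by
  unfold F
  simp [Set.indicator_of_notMem (hx _)]

lemma F_ne_top (x : ℝ) : F x ≠ ⊤ := by
  by_cases hx : ∃ n, x ∈ I n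
  · obtain ⟨n, hn⟩ := hx
    rw [F_eq_of_mem hn]; exact ENNReal.ofReal_ne_top
  · push_neg at hx
    rw [F_eq_zero hx]; exact ENNReal.zero_ne_top

noncomputable def f : ℝ → ℝ := fun x => (F x).toReal

lemma ofReal_f (x : ℝ) : ENNReal.ofReal (f x) = F x :=
  ENNReal.ofReal_toReal (F_ne_top x)

lemma f_eq_of_mem {x : ℝ} {n : ℕ} (hx : x ∈ I n) : f x = h n := by
  rw [f, F_eq_of_mem hx, ENNReal.toReal_ofReal (h_pos n).le]

lemma f_meas : Measurable f := F_meas.ennreal_toReal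

lemma f_nonneg (x : ℝ) : 0 ≤ f x := ENNReal.toReal_nonneg

lemma lintegral_F : ∫⁻ x, F x = 1 := by
  unfold F
  rw [lintegral_tsum (fun n => (measurable_const.indicator (I_meas n)).aemeasurable)]
  have : ∀ n : ℕ, ∫⁻ x, (I n).indicator (fun _ => ENNReal.ofReal (h n)) x
      = ENNReal.ofReal ((1/2:ℝ)^(n+1)) := by
    intro n
    rw [lintegral_indicator (I_meas n), setLIntegral_const, vol_I,
      ← ENNReal.ofReal_mul (h_pos n).le, hd]
  rw [tsum_congr this]
  have hsum : Summable (fun n : ℕ => (1/2:ℝ)^(n+1)) := by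
    simp_rw [pow_succ']
    exact summable_geometric_two.mul_left _
  rw [← ENNReal.ofReal_tsum_of_nonneg (fun n => by positivity) hsum]
  have : ∑' n : ℕ, (1/2:ℝ)^(n+1) = 1 := by
    simp_rw [pow_succ']
    rw [tsum_mul_left, tsum_geometric_two]
    norm_num
  rw [this, ENNReal.ofReal_one]

lemma hplus_ge (n : ℕ) :
    (1:ℝ≥0∞) ≤ ∫⁻ x in I n, ∫⁻ y in I n,
      logKernel x y * ENNReal.ofReal (f x) * ENNReal.ofReal (f y) := by
  set C : ℝ≥0∞ :=
    ENNReal.ofReal ((4:ℝ)^(n+1)) * ENNReal.ofReal (h n) * ENNReal.ofReal (h n) with hC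
  have key : ∀ x ∈ I n, ∀ y ∈ I n,
      C ≤ logKernel x y * ENNReal.ofReal (f x) * ENNReal.ofReal (f y) := by
    intro x hx y hy
    rw [f_eq_of_mem hx, f_eq_of_mem hy, hC]
    refine mul_le_mul' (mul_le_mul' ?_ le_rfl) le_rfl
    unfold logKernel
    by_cases hxy : x = y
    · simp [hxy]
    · rw [if_neg hxy]
      apply ENNReal.ofReal_le_ofReal
      have habs : 0 < |x - y| := abs_pos.2 (sub_ne_zero.2 hxy)
      have habs2 : |x - y| ≤ d n := by
        obtain ⟨hx1, hx2⟩ := hx; obtain ⟨hy1, hy2⟩ := hy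
        rw [abs_le]; constructor <;> nlinarith [d_pos n]
      have hlog : Real.log |x - y| ≤ Real.log (d n) := Real.log_le_log habs habs2
      have hlogd : Real.log (d n) = -((4:ℝ)^(n+1)) := Real.log_exp _
      have : (4:ℝ)^(n+1) ≤ Real.log (1 / |x - y|) := by
        rw [one_div, Real.log_inv]
        linarith
      exact this.trans (le_max_left _ _)
  have hval : (4:ℝ)^(n+1) * h n * h n * d n * d n = 1 := by
    calc (4:ℝ)^(n+1) * h n * h n * d n * d n
        = ((4:ℝ) * ((1/2) * (1/2)))^(n+1) * ((h n * d n) / (1/2)^(n+1))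
          * ((h n * d n) / (1/2)^(n+1)) := by
          rw [mul_pow, mul_pow]
          field_simp
      _ = 1 := by rw [hd]; norm_num
  have hone : (1:ℝ≥0∞) = C * volume (I n) * volume (I n) := by
    have h4 : (0:ℝ) ≤ (4:ℝ)^(n+1) := by positivity
    have hh := (h_pos n).le
    have hdn := (d_pos n).le
    rw [hC, vol_I, ← ENNReal.ofReal_mul h4, ← ENNReal.ofReal_mul (mul_nonneg h4 hh),
      ← ENNReal.ofReal_mul (mul_nonneg (mul_nonneg h4 hh) hh),
      ← ENNReal.ofReal_mul (mul_nonneg (mul_nonneg (mul_nonneg h4 hh) hh) hdn), hval,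
      ENNReal.ofReal_one]
  rw [hone]
  calc C * volume (I n) * volume (I n)
      = ∫⁻ _ in I n, C * volume (I n) := by rw [setLIntegral_const]
    _ ≤ ∫⁻ x in I n, ∫⁻ y in I n,
          logKernel x y * ENNReal.ofReal (f x) * ENNReal.ofReal (f y) := by
        apply setLIntegral_mono' (I_meas n)
        intro x hx
        calc C * volume (I n) = ∫⁻ _ in I n, C := (setLIntegral_const _ _).symm
          _ ≤ _ := setLIntegral_mono' (I_meas n) (fun y hy => key x hx y hy)

end HplusCex

/-- There exists a nonnegative, compactly supported function `f ∈ L¹(ℝ)` (of unit `L¹`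
norm) whose positive logarithmic energy is infinite. -/
theorem exists_integrable_hplus_eq_top :
    ∃ f : ℝ → ℝ, Measurable f ∧ (∀ x, 0 ≤ f x) ∧ HasCompactSupport f ∧
      Integrable f (volume : Measure ℝ) ∧ (∫ x, f x = 1) ∧ Hplus f = ⊤ := by
  refine ⟨HplusCex.f, HplusCex.f_meas, HplusCex.f_nonneg, ?_, ?_, ?_, ?_⟩
  · apply HasCompactSupport.intro (isCompact_Icc : IsCompact (Set.Icc (0:ℝ) 1))
    intro x hx
    apply ENNReal.toReal_eq_zero_iff _ |>.2
    left
    apply HplusCex.F_eq_zero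
    intro n hn
    exact hx (HplusCex.I_subset n hn)
  · constructor
    · exact HplusCex.f_meas.aestronglyMeasurable
    · rw [HasFiniteIntegral]
      have : ∀ x : ℝ, ‖HplusCex.f x‖ₑ = HplusCex.F x := by
        intro x
        rw [← ofReal_norm, Real.norm_of_nonneg (HplusCex.f_nonneg x),
          HplusCex.ofReal_f]
      simp_rw [this, HplusCex.lintegral_F]
      exact ENNReal.one_lt_top
  · rw [MeasureTheory.integral_eq_lintegral_of_nonneg_ae
      (Filter.Eventually.of_forall HplusCex.f_nonneg) HplusCex.f_meas.aestronglyMeasurable]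
    simp_rw [HplusCex.ofReal_f, HplusCex.lintegral_F]
    simp
  · rw [Hplus, eq_top_iff]
    calc (⊤:ℝ≥0∞) = ∑' n : ℕ, (1:ℝ≥0∞) :=
        (ENNReal.tsum_const_eq_top_of_ne_zero one_ne_zero).symm
      _ ≤ ∑' n : ℕ, ∫⁻ x in HplusCex.I n, ∫⁻ y in HplusCex.I n,
            logKernel x y * ENNReal.ofReal (HplusCex.f x) * ENNReal.ofReal (HplusCex.f y) :=
        ENNReal.tsum_le_tsum HplusCex.hplus_ge
      _ ≤ ∑' n : ℕ, ∫⁻ x in HplusCex.I n, ∫⁻ y,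
            logKernel x y * ENNReal.ofReal (HplusCex.f x) * ENNReal.ofReal (HplusCex.f y) := by
        apply ENNReal.tsum_le_tsum
        intro n
        apply lintegral_mono
        intro x
        exact setLIntegral_le_lintegral _ _
      _ = ∫⁻ x in ⋃ n, HplusCex.I n, ∫⁻ y,
            logKernel x y * ENNReal.ofReal (HplusCex.f x) * ENNReal.ofReal (HplusCex.f y) :=
        (lintegral_iUnion HplusCex.I_meas (fun m n => HplusCex.I_disj) _).symm
      _ ≤ ∫⁻ x, ∫⁻ y,
            logKernel x y * ENNReal.ofReal (HplusCex.f x) * ENNReal.ofReal (HplusCex.f y) :=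
        setLIntegral_le_lintegral _ _
end

section
/- For every γ < 1/2 there exists a nonnegative, compactly supported measurable function f : ℝ → ℝ belonging to the Calderón–Zygmund class L(log L)^γ, i.e. satisfying ∫_ℝ f(x)·(log(1 + f(x)))^γ dx < ∞, such that H⁺(f) = ∫_ℝ ∫_ℝ log⁺(1/|x−y|) f(x) f(y) dx dy = +∞. -/
open MeasureTheory Set
open scoped ENNReal

namespace CE

/-- interval lengths -/
noncomputable def eps (n : ℕ) : ℝ := Real.exp (-(2 ^ n))

/-- heights -/
noncomputable def hh (n : ℕ) : ℝ := (2 : ℝ) ^ (-(n : ℝ) / 2) * Real.exp (2 ^ n)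

/-- intervals -/
def I (n : ℕ) : Set ℝ := Set.Ico ((1 / 2 : ℝ) ^ n) ((1 / 2 : ℝ) ^ n + eps n)

noncomputable def F (x : ℝ) : ℝ≥0∞ :=
  ∑' n, (I n).indicator (fun _ => ENNReal.ofReal (hh n)) x

noncomputable def f (x : ℝ) : ℝ := (F x).toReal

lemma eps_pos (n : ℕ) : 0 < eps n := Real.exp_pos _

lemma hh_pos (n : ℕ) : 0 < hh n :=
  mul_pos (Real.rpow_pos_of_pos two_pos _) (Real.exp_pos _)

lemma log_two_le_one : Real.log 2 ≤ 1 := by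
  have := Real.log_two_lt_d9; linarith

lemma nat_le_two_pow (n : ℕ) : (n : ℝ) ≤ (2 : ℝ) ^ n := by
  exact_mod_cast (Nat.lt_two_pow_self (n := n)).le

lemma nat_succ_le_two_pow (n : ℕ) : (n : ℝ) + 1 ≤ (2 : ℝ) ^ n := by
  exact_mod_cast Nat.lt_two_pow_self (n := n)

lemma eps_le (n : ℕ) : eps n ≤ (1 / 2 : ℝ) ^ n := by
  have h1 : ((1 / 2 : ℝ)) ^ n = Real.exp ((n : ℝ) * Real.log (1 / 2)) := by
    rw [Real.exp_nat_mul, Real.exp_log (by norm_num : (0 : ℝ) < 1 / 2)]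
  rw [eps, h1]
  apply Real.exp_le_exp.2
  rw [one_div, Real.log_inv]
  have h2 : (n : ℝ) * Real.log 2 ≤ (2 : ℝ) ^ n := by
    have := nat_le_two_pow n
    have h3 : (n : ℝ) * Real.log 2 ≤ (n : ℝ) * 1 :=
      mul_le_mul_of_nonneg_left log_two_le_one (Nat.cast_nonneg n)
    linarith
  linarith

lemma upper_le {m n : ℕ} (h : m < n) : (1 / 2 : ℝ) ^ n + eps n ≤ (1 / 2 : ℝ) ^ m := by
  have h1 : (1 / 2 : ℝ) ^ n ≤ (1 / 2 : ℝ) ^ (m + 1) :=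
    pow_le_pow_of_le_one (by norm_num) (by norm_num) (by omega)
  have h2 := eps_le n
  have h3 : (1 / 2 : ℝ) ^ (m + 1) + (1 / 2 : ℝ) ^ (m + 1) = (1 / 2 : ℝ) ^ m := by
    rw [pow_succ]; ring
  linarith

lemma mem_unique {x : ℝ} {m n : ℕ} (hm : x ∈ I m) (hn : x ∈ I n) : m = n := by
  by_contra hne
  rcases Nat.lt_or_ge m n with h | h
  · exact absurd (lt_of_lt_of_le hn.2 (upper_le h)) (not_lt.2 hm.1)
  · have h' : n < m := lt_of_le_of_ne h (Ne.symm hne)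
    exact absurd (lt_of_lt_of_le hm.2 (upper_le h')) (not_lt.2 hn.1)

lemma F_mem {x : ℝ} {n : ℕ} (hx : x ∈ I n) : F x = ENNReal.ofReal (hh n) := by
  rw [F, tsum_eq_single n]
  · rw [Set.indicator_of_mem hx]
  · intro m hm
    rw [Set.indicator_of_notMem]
    intro hxm
    exact hm (mem_unique hxm hx)

lemma f_mem {x : ℝ} {n : ℕ} (hx : x ∈ I n) : f x = hh n := by
  rw [f, F_mem hx, ENNReal.toReal_ofReal (hh_pos n).le]

lemma F_not {x : ℝ} (h : ∀ n, x ∉ I n) : F x = 0 := by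
  have h1 : ∀ n : ℕ, (I n).indicator (fun _ => ENNReal.ofReal (hh n)) x = 0 :=
    fun n => Set.indicator_of_notMem (h n) _
  rw [F, tsum_congr h1, tsum_zero]

lemma f_not {x : ℝ} (h : ∀ n, x ∉ I n) : f x = 0 := by
  rw [f, F_not h, ENNReal.toReal_zero]

lemma measurable_f : Measurable f := by
  apply Measurable.ennreal_toReal
  exact Measurable.ennreal_tsum fun n =>
    Measurable.indicator measurable_const measurableSet_Ico

lemma f_nonneg (x : ℝ) : 0 ≤ f x := ENNReal.toReal_nonneg

lemma I_subset (n : ℕ) : I n ⊆ Set.Icc (0 : ℝ) 2 := by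
  intro x hx
  have h1 : (0 : ℝ) < (1 / 2 : ℝ) ^ n := by positivity
  have h2 : (1 / 2 : ℝ) ^ n ≤ 1 := pow_le_one₀ (by norm_num) (by norm_num)
  have h3 := eps_le n
  exact ⟨by linarith [hx.1], by linarith [hx.2]⟩

lemma f_support {x : ℝ} (hx : x ∉ Set.Icc (0 : ℝ) 2) : f x = 0 :=
  f_not fun n hxn => hx (I_subset n hxn)

lemma compact_support_f : HasCompactSupport f :=
  HasCompactSupport.intro isCompact_Icc fun _ hx => f_support hx

lemma hh_mul_eps (n : ℕ) : hh n * eps n = (2 : ℝ) ^ (-(n : ℝ) / 2) := by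
  rw [hh, eps, mul_assoc, ← Real.exp_add]
  simp

lemma exp_one_le_hh (n : ℕ) : Real.exp 1 ≤ hh n := by
  have h1 : Real.exp (-(n : ℝ)) ≤ (2 : ℝ) ^ (-(n : ℝ) / 2) := by
    rw [Real.rpow_def_of_pos two_pos]
    apply Real.exp_le_exp.2
    have hl0 : 0 ≤ Real.log 2 := Real.log_nonneg one_le_two
    have hn0 : (0 : ℝ) ≤ n := Nat.cast_nonneg n
    nlinarith [log_two_le_one]
  have h2 : Real.exp (-(n : ℝ)) * Real.exp (2 ^ n) ≤ hh n := by
    rw [hh]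
    exact mul_le_mul_of_nonneg_right h1 (Real.exp_pos _).le
  rw [← Real.exp_add] at h2
  have h3 : (1 : ℝ) ≤ -(n : ℝ) + 2 ^ n := by
    have := nat_succ_le_two_pow n; linarith
  exact le_trans (Real.exp_le_exp.2 h3) h2

lemma one_le_log (n : ℕ) : 1 ≤ Real.log (1 + hh n) := by
  rw [Real.le_log_iff_exp_le (by linarith [hh_pos n])]
  linarith [exp_one_le_hh n, hh_pos n]

lemma log_le (n : ℕ) : Real.log (1 + hh n) ≤ (2 : ℝ) ^ (n + 1) := by
  rw [Real.log_le_iff_le_exp (by linarith [hh_pos n])]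
  have h1 : hh n ≤ Real.exp (2 ^ n) := by
    rw [hh]
    have hexp : -(n : ℝ) / 2 ≤ 0 := by
      have : (0 : ℝ) ≤ n := Nat.cast_nonneg n
      linarith
    have h0 : (2 : ℝ) ^ (-(n : ℝ) / 2) ≤ 1 :=
      Real.rpow_le_one_of_one_le_of_nonpos one_le_two hexp
    calc (2 : ℝ) ^ (-(n : ℝ) / 2) * Real.exp (2 ^ n)
        ≤ 1 * Real.exp (2 ^ n) :=
          mul_le_mul_of_nonneg_right h0 (Real.exp_pos _).le
      _ = Real.exp (2 ^ n) := one_mul _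
  have h2 : (2 : ℝ) ≤ Real.exp 1 := by
    have := Real.add_one_le_exp (1 : ℝ); linarith
  have h3 : 1 + hh n ≤ Real.exp 1 * Real.exp (2 ^ n) := by
    have he1 : (1 : ℝ) ≤ Real.exp (2 ^ n) :=
      Real.one_le_exp (by positivity)
    nlinarith [Real.exp_pos ((2 : ℝ) ^ n)]
  rw [← Real.exp_add] at h3
  refine le_trans h3 (Real.exp_le_exp.2 ?_)
  have h4 : (1 : ℝ) ≤ (2 : ℝ) ^ n := one_le_pow₀ one_le_two
  have h5 : (2 : ℝ) ^ (n + 1) = 2 ^ n + 2 ^ n := by rw [pow_succ]; ring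
  linarith

lemma energy_const (n : ℕ) :
    (2 : ℝ) ^ n * (hh n * eps n) * (hh n * eps n) = 1 := by
  rw [hh_mul_eps, ← Real.rpow_natCast 2 n, ← Real.rpow_add two_pos,
    ← Real.rpow_add two_pos]
  rw [show (n : ℝ) + -(n : ℝ) / 2 + -(n : ℝ) / 2 = 0 by ring, Real.rpow_zero]

lemma measurableSet_I (n : ℕ) : MeasurableSet (I n) := measurableSet_Ico

lemma volume_I (n : ℕ) : volume (I n) = ENNReal.ofReal (eps n) := by
  rw [I, Real.volume_Ico, add_sub_cancel_left]

lemma pairwise_disjoint : Pairwise (Function.onFun Disjoint I) := by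
  intro m n hmn
  rw [Function.onFun, Set.disjoint_left]
  intro x hxm hxn
  exact hmn (mem_unique hxm hxn)

lemma kernel_ge {n : ℕ} {x y : ℝ} (hx : x ∈ I n) (hy : y ∈ I n) :
    ENNReal.ofReal ((2 : ℝ) ^ n) ≤ logKernel x y := by
  rw [logKernel]
  split_ifs with h
  · exact le_top
  · apply ENNReal.ofReal_le_ofReal
    rw [logPlus]
    refine le_max_of_le_left ?_
    have habs : |x - y| < eps n := by
      rw [abs_sub_lt_iff]
      exact ⟨by linarith [hx.2, hy.1], by linarith [hy.2, hx.1]⟩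
    have habs0 : 0 < |x - y| := abs_pos.2 (sub_ne_zero.2 h)
    rw [one_div, Real.log_inv]
    have h1 : Real.log |x - y| ≤ Real.log (eps n) :=
      Real.log_le_log habs0 habs.le
    have h2 : Real.log (eps n) = -(2 ^ n) := by rw [eps, Real.log_exp]
    linarith

end CE

/-- For every `γ < 1/2` there exists a nonnegative, compactly supported, measurable
function `f` in the Calderón–Zygmund class `L(log L)^γ`, i.e. with
`∫ f (log(1+f))^γ < ∞`, such that `H⁺(f) = +∞`. -/
theorem exists_logL_gamma_hplus_eq_top (γ : ℝ) (hγ : γ < 1 / 2) :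
    ∃ f : ℝ → ℝ, Measurable f ∧ (∀ x, 0 ≤ f x) ∧ HasCompactSupport f ∧
      (∫⁻ x, ENNReal.ofReal (f x * Real.log (1 + f x) ^ γ) < ⊤) ∧ Hplus f = ⊤ := by
  refine ⟨CE.f, CE.measurable_f, CE.f_nonneg, CE.compact_support_f, ?_, ?_⟩
  · -- the L(log L)^γ bound
    set δ : ℝ := max γ 0 with hδdef
    have hδ : δ < 1 / 2 := max_lt hγ (by norm_num)
    have hδ0 : 0 ≤ δ := le_max_right _ _
    set c : ℕ → ℝ≥0∞ := fun n => ENNReal.ofReal (CE.hh n * ((2 : ℝ) ^ (n + 1)) ^ δ)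
      with hcdef
    have hpt : ∀ x : ℝ, ENNReal.ofReal (CE.f x * Real.log (1 + CE.f x) ^ γ) ≤
        ∑' n, (CE.I n).indicator (fun _ => c n) x := by
      intro x
      by_cases hx : ∃ n, x ∈ CE.I n
      · obtain ⟨n, hn⟩ := hx
        refine le_trans ?_ (ENNReal.le_tsum n)
        rw [Set.indicator_of_mem hn, CE.f_mem hn, hcdef]
        apply ENNReal.ofReal_le_ofReal
        apply mul_le_mul_of_nonneg_left _ (CE.hh_pos n).le
        calc Real.log (1 + CE.hh n) ^ γ
            ≤ Real.log (1 + CE.hh n) ^ δ :=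
              Real.rpow_le_rpow_of_exponent_le (CE.one_le_log n) (le_max_left γ 0)
          _ ≤ ((2 : ℝ) ^ (n + 1)) ^ δ :=
              Real.rpow_le_rpow (by linarith [CE.one_le_log n]) (CE.log_le n) hδ0
      · push_neg at hx
        rw [CE.f_not hx]
        simp
    have hle : (∫⁻ x, ENNReal.ofReal (CE.f x * Real.log (1 + CE.f x) ^ γ)) ≤
        ∑' n, c n * ENNReal.ofReal (CE.eps n) := by
      refine le_trans (lintegral_mono hpt) ?_
      rw [lintegral_tsum fun n =>
        (measurable_const.indicator (CE.measurableSet_I n)).aemeasurable]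
      refine ENNReal.tsum_le_tsum fun n => ?_
      rw [lintegral_indicator_const (CE.measurableSet_I n), CE.volume_I]
    refine lt_of_le_of_lt hle ?_
    have hterm : ∀ n : ℕ, c n * ENNReal.ofReal (CE.eps n) =
        ENNReal.ofReal ((2 : ℝ) ^ δ * ((2 : ℝ) ^ (δ - 1 / 2)) ^ n) := by
      intro n
      rw [hcdef, ← ENNReal.ofReal_mul
        (mul_nonneg (CE.hh_pos n).le (Real.rpow_nonneg (by positivity) _))]
      congr 1
      have h1 : CE.hh n * ((2 : ℝ) ^ (n + 1)) ^ δ * CE.eps n =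
          (2 : ℝ) ^ (-(n : ℝ) / 2) * ((2 : ℝ) ^ (n + 1)) ^ δ := by
        rw [← CE.hh_mul_eps n]; ring
      rw [h1, ← Real.rpow_natCast (2 : ℝ) (n + 1),
        ← Real.rpow_natCast ((2 : ℝ) ^ (δ - 1 / 2)) n,
        ← Real.rpow_mul (by norm_num : (0 : ℝ) ≤ 2),
        ← Real.rpow_mul (by norm_num : (0 : ℝ) ≤ 2),
        ← Real.rpow_add two_pos, ← Real.rpow_add two_pos]
      congr 1
      push_cast
      ring
    have hsummable : Summable (fun n : ℕ => (2 : ℝ) ^ δ * ((2 : ℝ) ^ (δ - 1 / 2)) ^ n) := by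
      apply Summable.mul_left
      exact summable_geometric_of_lt_one (Real.rpow_nonneg (by norm_num) _)
        (Real.rpow_lt_one_of_one_lt_of_neg one_lt_two (by linarith))
    calc ∑' n, c n * ENNReal.ofReal (CE.eps n)
        = ∑' n : ℕ, ENNReal.ofReal ((2 : ℝ) ^ δ * ((2 : ℝ) ^ (δ - 1 / 2)) ^ n) :=
          tsum_congr hterm
      _ = ENNReal.ofReal (∑' n : ℕ, (2 : ℝ) ^ δ * ((2 : ℝ) ^ (δ - 1 / 2)) ^ n) :=
          (ENNReal.ofReal_tsum_of_nonneg (fun n => by positivity) hsummable).symm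
      _ < ⊤ := ENNReal.ofReal_lt_top
  · -- Hplus = ⊤
    set g : ℝ → ℝ≥0∞ := fun x =>
      ∫⁻ y, logKernel x y * ENNReal.ofReal (CE.f x) * ENNReal.ofReal (CE.f y) with hgdef
    have step1 : ∀ n : ℕ, ∀ x ∈ CE.I n,
        ENNReal.ofReal ((2 : ℝ) ^ n * CE.hh n * CE.hh n * CE.eps n) ≤ g x := by
      intro n x hx
      have hpt : ∀ y ∈ CE.I n,
          ENNReal.ofReal ((2 : ℝ) ^ n * CE.hh n * CE.hh n) ≤
            logKernel x y * ENNReal.ofReal (CE.f x) * ENNReal.ofReal (CE.f y) := by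
        intro y hy
        rw [CE.f_mem hx, CE.f_mem hy,
          ENNReal.ofReal_mul (mul_nonneg (by positivity) (CE.hh_pos n).le),
          ENNReal.ofReal_mul (by positivity)]
        exact mul_le_mul' (mul_le_mul' (CE.kernel_ge hx hy) le_rfl) le_rfl
      calc ENNReal.ofReal ((2 : ℝ) ^ n * CE.hh n * CE.hh n * CE.eps n)
          = ENNReal.ofReal ((2 : ℝ) ^ n * CE.hh n * CE.hh n) *
              ENNReal.ofReal (CE.eps n) := by
            rw [← ENNReal.ofReal_mul
              (mul_nonneg (mul_nonneg (by positivity) (CE.hh_pos n).le) (CE.hh_pos n).le)]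
        _ = ENNReal.ofReal ((2 : ℝ) ^ n * CE.hh n * CE.hh n) * volume (CE.I n) := by
            rw [CE.volume_I]
        _ = ∫⁻ _ in CE.I n, ENNReal.ofReal ((2 : ℝ) ^ n * CE.hh n * CE.hh n) :=
            (setLIntegral_const _ _).symm
        _ ≤ ∫⁻ y in CE.I n,
              logKernel x y * ENNReal.ofReal (CE.f x) * ENNReal.ofReal (CE.f y) :=
            setLIntegral_mono' measurableSet_Ico hpt
        _ ≤ g x := setLIntegral_le_lintegral _ _
    have step2 : ∀ n : ℕ, (1 : ℝ≥0∞) ≤ ∫⁻ x in CE.I n, g x := by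
      intro n
      have h1 : (1 : ℝ≥0∞) =
          ENNReal.ofReal ((2 : ℝ) ^ n * CE.hh n * CE.hh n * CE.eps n) *
            volume (CE.I n) := by
        rw [CE.volume_I,
          ← ENNReal.ofReal_mul (mul_nonneg (mul_nonneg
            (mul_nonneg (by positivity) (CE.hh_pos n).le) (CE.hh_pos n).le)
            (CE.eps_pos n).le)]
        rw [show (2 : ℝ) ^ n * CE.hh n * CE.hh n * CE.eps n * CE.eps n =
          (2 : ℝ) ^ n * (CE.hh n * CE.eps n) * (CE.hh n * CE.eps n) by ring,
          CE.energy_const n, ENNReal.ofReal_one]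
      rw [h1]
      calc ENNReal.ofReal ((2 : ℝ) ^ n * CE.hh n * CE.hh n * CE.eps n) * volume (CE.I n)
          = ∫⁻ _ in CE.I n,
              ENNReal.ofReal ((2 : ℝ) ^ n * CE.hh n * CE.hh n * CE.eps n) :=
            (setLIntegral_const _ _).symm
        _ ≤ ∫⁻ x in CE.I n, g x :=
            setLIntegral_mono' measurableSet_Ico (step1 n)
    rw [eq_top_iff]
    calc (⊤ : ℝ≥0∞) = ∑' _ : ℕ, (1 : ℝ≥0∞) :=
          (ENNReal.tsum_const_eq_top_of_ne_zero one_ne_zero).symm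
      _ ≤ ∑' n : ℕ, ∫⁻ x in CE.I n, g x := ENNReal.tsum_le_tsum step2
      _ = ∫⁻ x in ⋃ n, CE.I n, g x :=
          (lintegral_iUnion (fun n => measurableSet_Ico) CE.pairwise_disjoint g).symm
      _ ≤ ∫⁻ x, g x := setLIntegral_le_lintegral _ _
      _ = Hplus CE.f := rfl
end
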